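/- Let k be a real number, R > 0, μ a finite (nonnegative) measure on ℝ³ whose support is contained in the closed ball of radius R centered at the origin, and f : ℝ³ → ℂ a function integrable with respect to μ. Define u(x) = ∫ exp(i k ‖x − y‖)/‖x − y‖ · f(y) dμ(y). Then u satisfies the Sommerfeld radiation condition: there exist constants C > 0 and R₀ > R such that for all x with ‖x‖ ≥ R₀, ‖ Du(x)(x/‖x‖) − i k u(x) ‖ ≤ C / ‖x‖², where Du(x)(x/‖x‖) denotes the directional (Fréchet) derivative of u at x in the radial direction x/‖x‖. -/

import Mathlib

open MeasureTheory

/-- The (topological) support of a measure: the set of points all of whose neighborhoods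
have nonzero measure. -/
def measureSupport (μ : Measure (EuclideanSpace ℝ (Fin 3))) : Set (EuclideanSpace ℝ (Fin 3)) :=
  {x | ∀ U ∈ nhds x, μ U ≠ 0}

noncomputable section SommerfeldAux
set_option synthInstance.maxHeartbeats 1000000
set_option maxHeartbeats 1000000

open Complex

private abbrev E3 := EuclideanSpace ℝ (Fin 3)

private def gker (k : ℝ) (t : ℝ) : ℂ :=
  (Complex.I * k * Complex.exp (Complex.I * k * t) * t - Complex.exp (Complex.I * k * t)) / (t:ℂ)^2

private def Dmap (k : ℝ) (f : E3 → ℂ) (x y : E3) : E3 →L[ℝ] ℂ :=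
  (f y * gker k ‖x - y‖ * ((‖x - y‖⁻¹ : ℝ) : ℂ)) •
    (Complex.ofRealCLM.comp (innerSL ℝ (x - y)))


lemma Dmap_apply (k : ℝ) (f : E3 → ℂ) (x y v : E3) :
    Dmap k f x y v = f y * gker k ‖x - y‖ * ((‖x - y‖⁻¹ * (inner ℝ (x - y) v : ℝ) : ℝ) : ℂ) := by
  simp only [Dmap, ContinuousLinearMap.smul_apply, ContinuousLinearMap.coe_comp',
    Function.comp_apply, innerSL_apply_apply, Complex.ofRealCLM_apply, smul_eq_mul,
    Complex.ofReal_mul]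
  ring

lemma norm_gker_le (k : ℝ) (t : ℝ) (ht : 0 < t) :
    ‖gker k t‖ ≤ (|k| * t + 1) / t^2 := by
  unfold gker
  rw [norm_div]
  have hexp : ‖Complex.exp (Complex.I * k * t)‖ = 1 := by
    rw [Complex.norm_exp]
    simp
  have hden : ‖((t : ℝ) : ℂ)^2‖ = t^2 := by
    simp [abs_of_pos ht]
  rw [hden]
  gcongr
  refine le_trans (norm_sub_le _ _) ?_
  rw [hexp]
  gcongr
  simp only [norm_mul, hexp, Complex.norm_I, Complex.norm_real, Real.norm_eq_abs]
  rw [abs_of_pos ht]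
  ring_nf
  exact le_refl _

lemma Dmap_norm_le (k : ℝ) (f : E3 → ℂ) (x y : E3) (h : x ≠ y) :
    ‖Dmap k f x y‖ ≤ ‖f y‖ * ((|k| * ‖x - y‖ + 1) / ‖x - y‖^2) := by
  have hr : (0:ℝ) < ‖x - y‖ := norm_pos_iff.mpr (sub_ne_zero.mpr h)
  refine ContinuousLinearMap.opNorm_le_bound _ (by positivity) (fun v => ?_)
  rw [Dmap_apply]
  rw [norm_mul, norm_mul, Complex.norm_real, Real.norm_eq_abs, abs_mul, abs_of_pos (inv_pos.mpr hr)]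
  calc ‖f y‖ * ‖gker k ‖x - y‖‖ * (‖x - y‖⁻¹ * |(inner ℝ (x - y) v : ℝ)|)
      ≤ ‖f y‖ * ((|k| * ‖x - y‖ + 1) / ‖x - y‖^2) * (‖x - y‖⁻¹ * (‖x - y‖ * ‖v‖)) := by
        gcongr
        · exact norm_gker_le _ _ hr
        · exact abs_real_inner_le_norm _ _
    _ = ‖f y‖ * ((|k| * ‖x - y‖ + 1) / ‖x - y‖^2) * ‖v‖ := by
        rw [inv_mul_cancel_left₀ (ne_of_gt hr)]

lemma hasFDerivAt_norm_sub (y x : E3) (h : x ≠ y) :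
    HasFDerivAt (fun w => ‖w - y‖) (‖x - y‖⁻¹ • innerSL ℝ (x - y)) x := by
  have h0 : x - y ≠ 0 := sub_ne_zero.mpr h
  have h1 : HasFDerivAt (fun w : E3 => w - y) (ContinuousLinearMap.id ℝ E3) x :=
    (hasFDerivAt_id x).sub_const y
  have h2 := h1.norm_sq
  have h3 : (‖x - y‖ : ℝ)^2 ≠ 0 := pow_ne_zero _ (norm_ne_zero_iff.mpr h0)
  have h4 := h2.sqrt h3
  have h5 : (fun w : E3 => Real.sqrt (‖w - y‖ ^ 2)) = fun w => ‖w - y‖ := by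
    funext w; exact Real.sqrt_sq (norm_nonneg _)
  rw [h5] at h4
  refine h4.congr_fderiv ?_
  ext v
  simp [Real.sqrt_sq (norm_nonneg (x - y))]
  field_simp

lemma hasDerivAt_kernel (k : ℝ) (t : ℝ) (ht : t ≠ 0) :
    HasDerivAt (fun s : ℝ => Complex.exp (Complex.I * k * s) / (s : ℂ)) (gker k t) t := by
  have h1 : HasDerivAt (fun s : ℝ => ((s : ℂ))) 1 t := by
    simpa using (hasDerivAt_id t).ofReal_comp
  have h2 : HasDerivAt (fun s : ℝ => Complex.I * k * (s:ℂ)) (Complex.I * k) t := by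
    simpa using h1.const_mul (Complex.I * k)
  have h3 : HasDerivAt (fun s : ℝ => Complex.exp (Complex.I * k * s))
      (Complex.exp (Complex.I * k * t) * (Complex.I * k)) t := h2.cexp
  have ht' : (t : ℂ) ≠ 0 := Complex.ofReal_ne_zero.mpr ht
  have := h3.div h1 ht'
  refine this.congr_deriv ?_
  unfold gker
  ring

lemma hasFDerivAt_Dmap (k : ℝ) (f : E3 → ℂ) (x y : E3) (h : x ≠ y) :
    HasFDerivAt (fun w : E3 => Complex.exp (Complex.I * k * ‖w - y‖) / (‖w - y‖ : ℂ) * f y)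
      (Dmap k f x y) x := by
  have hr : (0:ℝ) < ‖x - y‖ := norm_pos_iff.mpr (sub_ne_zero.mpr h)
  have h1 := ((hasDerivAt_kernel k ‖x - y‖ (ne_of_gt hr)).hasFDerivAt.comp x
    (hasFDerivAt_norm_sub y x h)).mul_const (f y)
  refine h1.congr_fderiv ?_
  ext v
  simp only [Dmap, ContinuousLinearMap.smul_apply, ContinuousLinearMap.coe_comp',
    Function.comp_apply, innerSL_apply_apply, Complex.ofRealCLM_apply, smul_eq_mul,
    ContinuousLinearMap.smulRight_apply, ContinuousLinearMap.one_apply,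
    ContinuousLinearMap.toSpanSingleton_apply,
    Complex.real_smul, Complex.ofReal_mul]
  ring


lemma key_id (k a r : ℝ) (fy e : ℂ) (hr : r ≠ 0) :
    fy * ((Complex.I * k * e * r - e) / (r:ℂ)^2) * ((r⁻¹ * a : ℝ) : ℂ)
      - Complex.I * k * (e / (r:ℂ) * fy)
    = fy * e * ((r:ℂ))⁻¹ *
      (Complex.I * k * (((a/r : ℝ) : ℂ) - 1) - ((a/r : ℝ) : ℂ) * ((r:ℂ))⁻¹) := by
  have hrC : ((r:ℝ):ℂ) ≠ 0 := Complex.ofReal_ne_zero.mpr hr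
  push_cast
  field_simp
  ring

lemma pointwise_est (k R : ℝ) (hR : 0 < R) (f : E3 → ℂ) (y x : E3)
    (hy : ‖y‖ ≤ R) (hx : 2*R ≤ ‖x‖) :
    ‖Dmap k f x y (‖x‖⁻¹ • x) -
      Complex.I * k * (Complex.exp (Complex.I * k * ‖x - y‖) / (‖x - y‖ : ℂ) * f y)‖
      ≤ (4 * |k| * R + 4) / ‖x‖^2 * ‖f y‖ := by
  set n : ℝ := ‖x‖ with hn_def
  set p : ℝ := inner ℝ x y with hp_def
  set r : ℝ := ‖x - y‖ with hr_def
  have hn : 0 < n := lt_of_lt_of_le (by positivity) hx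
  have hrn : n - ‖y‖ ≤ r := by
    have := norm_sub_norm_le x y
    linarith [this]
  have hr_half : n/2 ≤ r := by linarith
  have hr : 0 < r := by linarith
  have hip : |p| ≤ n * ‖y‖ := by
    rw [hp_def]
    exact abs_real_inner_le_norm x y
  have hr2 : r^2 = n^2 - 2*p + ‖y‖^2 := by
    rw [hr_def, hp_def, hn_def, @norm_sub_sq_real]
  set a : ℝ := n⁻¹ * (n^2 - p) with ha_def
  have hinner : (inner ℝ (x - y) (‖x‖⁻¹ • x) : ℝ) = a := by
    rw [real_inner_smul_right, inner_sub_left, real_inner_self_eq_norm_sq, real_inner_comm]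
  have ha_pos : 0 < a := by
    have : n^2 - p > 0 := by nlinarith [abs_le.mp hip]
    positivity
  have ha_le_r : a ≤ r := by
    have h1 : (inner ℝ (x - y) (‖x‖⁻¹ • x) : ℝ) ≤ ‖x - y‖ * ‖‖x‖⁻¹ • x‖ :=
      real_inner_le_norm _ _
    have h2 : ‖‖x‖⁻¹ • x‖ = 1 := by
      rw [norm_smul, Real.norm_eq_abs, abs_of_pos (inv_pos.mpr hn)]
      exact inv_mul_cancel₀ (ne_of_gt hn)
    rw [hinner, h2, mul_one] at h1
    exact h1
  have hsq : r^2 - a^2 ≤ R^2 := by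
    have ha2 : a^2 = n^2 - 2*p + p^2/n^2 := by
      rw [ha_def]; field_simp; ring
    have heq : r^2 - a^2 = ‖y‖^2 - p^2/n^2 := by rw [hr2, ha2]; ring
    have hy2 : ‖y‖^2 ≤ R^2 := by nlinarith [norm_nonneg y]
    have hpn : p^2/n^2 ≥ 0 := by positivity
    linarith
  have hra : (r - a) * r ≤ R^2 := by
    nlinarith [mul_nonneg ha_pos.le (sub_nonneg.mpr ha_le_r)]
  set c : ℝ := a / r with hc_def
  have hc0 : 0 < c := div_pos ha_pos hr
  have hc1 : c ≤ 1 := (div_le_one hr).mpr ha_le_r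
  have h1c : 1 - c ≤ R^2 / r^2 := by
    have heq : 1 - c = (r - a)/r := by rw [hc_def]; field_simp
    rw [heq, div_le_div_iff₀ hr (by positivity)]
    nlinarith [mul_le_mul_of_nonneg_right hra hr.le]
  have key : Dmap k f x y (‖x‖⁻¹ • x) -
      Complex.I * k * (Complex.exp (Complex.I * k * r) / (r : ℂ) * f y)
      = (f y * Complex.exp (Complex.I * k * r) * ((r:ℂ))⁻¹) *
        (Complex.I * k * ((c:ℂ) - 1) - (c:ℂ) * ((r:ℂ))⁻¹) := by
    rw [Dmap_apply, hinner, hc_def]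
    exact key_id k a r (f y) (Complex.exp (Complex.I * k * r)) (ne_of_gt hr)
  rw [key]
  have hexp : ‖Complex.exp (Complex.I * k * r)‖ = 1 := by
    rw [Complex.norm_exp]; simp
  have hnorm1 : ‖(f y * Complex.exp (Complex.I * k * r) * ((r:ℂ))⁻¹)‖
      = ‖f y‖ * r⁻¹ := by
    rw [norm_mul, norm_mul, hexp, mul_one, norm_inv, Complex.norm_real,
      Real.norm_eq_abs, abs_of_pos hr]
  have hnorm2 : ‖Complex.I * k * ((c:ℂ) - 1) - (c:ℂ) * ((r:ℂ))⁻¹‖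
      ≤ |k| * (1 - c) + c * r⁻¹ := by
    refine le_trans (norm_sub_le _ _) ?_
    have e1 : ‖Complex.I * (k:ℂ) * ((c:ℂ) - 1)‖ = |k| * (1 - c) := by
      rw [norm_mul, norm_mul, Complex.norm_I, one_mul, Complex.norm_real, Real.norm_eq_abs]
      have h' : ((c:ℝ):ℂ) - 1 = ((c - 1 : ℝ):ℂ) := by push_cast; ring
      rw [h', Complex.norm_real, Real.norm_eq_abs, abs_of_nonpos (show c - 1 ≤ 0 by linarith)]
      ring
    have e2 : ‖(c:ℂ) * ((r:ℂ))⁻¹‖ = c * r⁻¹ := by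
      rw [norm_mul, norm_inv, Complex.norm_real, Complex.norm_real,
        Real.norm_eq_abs, Real.norm_eq_abs, abs_of_pos hc0, abs_of_pos hr]
    rw [e1, e2]
  rw [norm_mul, hnorm1]
  have hb : r⁻¹ * (|k| * (1 - c) + c * r⁻¹) ≤ (4 * |k| * R + 4) / n^2 := by
    have hterm1 : |k| * (1 - c) ≤ |k| * (R^2/r^2) :=
      mul_le_mul_of_nonneg_left h1c (abs_nonneg k)
    have hterm2 : c * r⁻¹ ≤ r⁻¹ := by
      calc c * r⁻¹ ≤ 1 * r⁻¹ := mul_le_mul_of_nonneg_right hc1 (inv_nonneg.mpr hr.le)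
        _ = r⁻¹ := one_mul _
    have step1 : r⁻¹ * (|k| * (1 - c) + c * r⁻¹) ≤ r⁻¹ * (|k| * (R^2/r^2) + r⁻¹) :=
      mul_le_mul_of_nonneg_left (add_le_add hterm1 hterm2) (inv_nonneg.mpr hr.le)
    have step2 : r⁻¹ * (|k| * (R^2/r^2) + r⁻¹) = |k| * R^2/r^3 + 1/r^2 := by
      field_simp
    have step3 : |k| * R^2/r^3 + 1/r^2 ≤ |k| * R^2/(n/2)^3 + 1/(n/2)^2 := by
      gcongr <;> positivity
    have step4 : |k| * R^2/(n/2)^3 + 1/(n/2)^2 ≤ (4 * |k| * R + 4) / n^2 := by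
      rw [div_add_div _ _ (by positivity) (by positivity),
        div_le_div_iff₀ (by positivity) (by positivity)]
      nlinarith [mul_nonneg (mul_nonneg (mul_nonneg (abs_nonneg k) hR.le)
        (sub_nonneg.mpr hx)) (by positivity : (0:ℝ) ≤ n^4)]
    calc r⁻¹ * (|k| * (1 - c) + c * r⁻¹) ≤ r⁻¹ * (|k| * (R^2/r^2) + r⁻¹) := step1
      _ = |k| * R^2/r^3 + 1/r^2 := step2
      _ ≤ |k| * R^2/(n/2)^3 + 1/(n/2)^2 := step3
      _ ≤ (4 * |k| * R + 4) / n^2 := step4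
  calc ‖f y‖ * r⁻¹ * ‖Complex.I * ↑k * (↑c - 1) - ↑c * (↑r)⁻¹‖
      ≤ ‖f y‖ * r⁻¹ * (|k| * (1 - c) + c * r⁻¹) := by
        gcongr
    _ = ‖f y‖ * (r⁻¹ * (|k| * (1 - c) + c * r⁻¹)) := by ring
    _ ≤ ‖f y‖ * ((4 * |k| * R + 4) / n^2) := by gcongr
    _ = (4 * |k| * R + 4) / ‖x‖^2 * ‖f y‖ := by ring

lemma kernel_meas (k : ℝ) (x : E3) :
    Measurable (fun y : E3 => Complex.exp (Complex.I * k * ‖x - y‖) / (‖x - y‖ : ℂ)) := by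
  have h1 : Measurable (fun y : E3 => ‖x - y‖) :=
    (continuous_const.sub continuous_id).norm.measurable
  have h2 : Measurable fun y : E3 => Complex.exp (Complex.I * k * (‖x - y‖ : ℂ)) := by
    exact Complex.measurable_exp.comp ((Complex.measurable_ofReal.comp h1).const_mul _)
  have h3 : Measurable fun y : E3 => ((‖x - y‖ : ℂ))⁻¹ := by
    have : (fun y : E3 => ((‖x - y‖ : ℂ))⁻¹) = fun y => ((‖x - y‖⁻¹ : ℝ) : ℂ) := by
      funext y; rw [Complex.ofReal_inv]
    rw [this]
    exact Complex.measurable_ofReal.comp h1.inv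
  simp only [div_eq_mul_inv]
  exact h2.mul h3

lemma gker_meas (k : ℝ) (x : E3) :
    Measurable (fun y : E3 => gker k ‖x - y‖) := by
  have h1 : Measurable (fun y : E3 => ‖x - y‖) :=
    (continuous_const.sub continuous_id).norm.measurable
  have h2 : Measurable fun y : E3 => Complex.exp (Complex.I * k * (‖x - y‖ : ℂ)) :=
    Complex.measurable_exp.comp ((Complex.measurable_ofReal.comp h1).const_mul _)
  have h3 : Measurable fun y : E3 => (((‖x - y‖ : ℝ) : ℂ))^2 :=
    ((Complex.measurable_ofReal.comp h1).pow_const 2)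
  have h4 : Measurable fun y : E3 => ((((‖x - y‖ : ℝ) : ℂ))^2)⁻¹ := by
    have : (fun y : E3 => ((((‖x - y‖ : ℝ) : ℂ))^2)⁻¹)
        = fun y => ((((‖x - y‖^2)⁻¹ : ℝ)) : ℂ) := by
      funext y; push_cast; ring
    rw [this]
    exact Complex.measurable_ofReal.comp ((h1.pow_const 2).inv)
  unfold gker
  simp only [div_eq_mul_inv]
  exact (((h2.const_mul (Complex.I * k)).mul (Complex.measurable_ofReal.comp h1)).sub h2).mul h4

lemma Dmap_aesm (k : ℝ) (f : E3 → ℂ) (x : E3) (μ : Measure E3)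
    (hf : AEStronglyMeasurable f μ) :
    AEStronglyMeasurable (fun y => Dmap k f x y) μ := by
  unfold Dmap
  have hscal : AEStronglyMeasurable
      (fun y => f y * gker k ‖x - y‖ * ((‖x - y‖⁻¹ : ℝ) : ℂ)) μ := by
    have h1 : Measurable (fun y : E3 => ‖x - y‖) :=
      (continuous_const.sub continuous_id).norm.measurable
    exact (hf.mul (gker_meas k x).aestronglyMeasurable).mul
      ((Complex.measurable_ofReal.comp h1.inv).aestronglyMeasurable)
  have hclm : Continuous
      (fun y : E3 => Complex.ofRealCLM.comp (innerSL ℝ (x - y))) := by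
    have h2 : Continuous (fun y : E3 => innerSL ℝ (x - y)) :=
      (innerSL ℝ).continuous.comp (continuous_const.sub continuous_id)
    exact continuous_const.clm_comp h2
  exact hscal.smul hclm.aestronglyMeasurable

private lemma ae_support_bound (R : ℝ) (μ : Measure E3)
    (hμ : measureSupport μ ⊆ Metric.closedBall 0 R) :
    ∀ᵐ y ∂μ, ‖y‖ ≤ R := by
  rw [MeasureTheory.ae_iff]
  refine MeasureTheory.measure_null_of_locally_null _ (fun x hx => ?_)
  simp only [Set.mem_setOf_eq, not_le] at hx
  have hxs : x ∉ measureSupport μ := by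
    intro hmem
    have := hμ hmem
    rw [Metric.mem_closedBall, dist_zero_right] at this
    linarith
  simp only [measureSupport, Set.mem_setOf_eq, not_forall] at hxs
  obtain ⟨U, hU, hU0⟩ := hxs
  refine ⟨U, mem_nhdsWithin_of_mem_nhds hU, ?_⟩
  simpa using hU0

private lemma gker_unif_bound (k R t : ℝ) (hR : 0 < R) (ht : R/2 ≤ t) :
    (|k| * t + 1) / t^2 ≤ 2 * |k| / R + 4 / R^2 := by
  have ht0 : 0 < t := by linarith
  calc (|k| * t + 1) / t^2 = |k| / t + 1 / t^2 := by field_simp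
    _ ≤ |k| / (R/2) + 1 / (R/2)^2 := by gcongr <;> first | exact abs_nonneg k | positivity
    _ = 2 * |k| / R + 4 / R^2 := by field_simp; ring

private lemma hasFDerivAt_potential (k R : ℝ) (hR : 0 < R)
    (μ : Measure E3) [IsFiniteMeasure μ]
    (hμ : measureSupport μ ⊆ Metric.closedBall 0 R)
    (f : E3 → ℂ) (hf : Integrable f μ)
    (x : E3) (hx : 2*R ≤ ‖x‖) :
    HasFDerivAt (fun x => ∫ y, Complex.exp (Complex.I * k * ‖x - y‖) / (‖x - y‖ : ℂ) * f y ∂μ)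
      (∫ y, Dmap k f x y ∂μ) x := by
  have hae : ∀ᵐ y ∂μ, ‖y‖ ≤ R := ae_support_bound R μ hμ
  have hball : ∀ x' : E3, x' ∈ Metric.ball x (R/2) → ∀ y : E3, ‖y‖ ≤ R → R/2 ≤ ‖x' - y‖ := by
    intro x' hx' y hy
    rw [Metric.mem_ball, dist_eq_norm] at hx'
    have h1 : ‖x‖ - ‖x' - x‖ ≤ ‖x'‖ := by
      have := norm_sub_norm_le x x'
      have h2 : ‖x - x'‖ = ‖x' - x‖ := norm_sub_rev _ _
      linarith [norm_sub_norm_le x x', h2 ▸ this]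
    have h3 : ‖x'‖ - ‖y‖ ≤ ‖x' - y‖ := norm_sub_norm_le x' y
    linarith
  refine hasFDerivAt_integral_of_dominated_of_fderiv_le
    (F' := fun x' y => Dmap k f x' y)
    (bound := fun y => (2 * |k| / R + 4 / R^2) * ‖f y‖)
    (Metric.ball_mem_nhds x (show (0:ℝ) < R/2 by positivity)) ?_ ?_ ?_ ?_ ?_ ?_
  · exact Filter.Eventually.of_forall fun x' =>
      ((kernel_meas k x').aestronglyMeasurable).mul hf.1
  · refine (hf.norm.const_mul R⁻¹).mono'
      (((kernel_meas k x).aestronglyMeasurable).mul hf.1) ?_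
    refine hae.mono fun y hy => ?_
    have hr : R ≤ ‖x - y‖ := by
      have := norm_sub_norm_le x y
      linarith
    have hr0 : 0 < ‖x - y‖ := by linarith
    have hexp : ‖Complex.exp (Complex.I * k * ‖x - y‖)‖ = 1 := by
      rw [Complex.norm_exp]; simp
    rw [norm_mul, norm_div, hexp, Complex.norm_real, Real.norm_eq_abs, abs_of_pos hr0]
    rw [one_div]
    calc ‖x - y‖⁻¹ * ‖f y‖ ≤ R⁻¹ * ‖f y‖ := by gcongr
      _ = R⁻¹ * ‖f y‖ := rfl
  · exact Dmap_aesm k f x μ hf.1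
  · refine hae.mono fun y hy x' hx' => ?_
    have hr : R/2 ≤ ‖x' - y‖ := hball x' hx' y hy
    have hxy : x' ≠ y := by
      intro h
      rw [h, sub_self, norm_zero] at hr
      linarith
    calc ‖Dmap k f x' y‖ ≤ ‖f y‖ * ((|k| * ‖x' - y‖ + 1) / ‖x' - y‖^2) :=
          Dmap_norm_le k f x' y hxy
      _ ≤ ‖f y‖ * (2 * |k| / R + 4 / R^2) := by
          gcongr
          exact gker_unif_bound k R _ hR hr
      _ = (2 * |k| / R + 4 / R^2) * ‖f y‖ := by ring
  · exact hf.norm.const_mul _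
  · refine hae.mono fun y hy x' hx' => ?_
    have hr : R/2 ≤ ‖x' - y‖ := hball x' hx' y hy
    have hxy : x' ≠ y := by
      intro h
      rw [h, sub_self, norm_zero] at hr
      linarith
    exact hasFDerivAt_Dmap k f x' y hxy

end SommerfeldAux

/-- Sommerfeld radiation condition for single-layer-type potentials: if `μ` is
a finite measure supported in the closed ball of radius `R` and `f ∈ L¹(μ)`, then
`u(x) = ∫ exp(i k ‖x - y‖)/‖x - y‖ · f(y) dμ(y)` satisfies
`(∂_r - ik) u = O(‖x‖⁻²)` as `‖x‖ → ∞`, where `∂_r u (x) = Du(x)(x/‖x‖)`. -/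
theorem potential_sommerfeld_radiation (k : ℝ) (R : ℝ) (hR : 0 < R)
    (μ : Measure (EuclideanSpace ℝ (Fin 3))) [IsFiniteMeasure μ]
    (hμ : measureSupport μ ⊆ Metric.closedBall 0 R)
    (f : EuclideanSpace ℝ (Fin 3) → ℂ) (hf : Integrable f μ)
    (u : EuclideanSpace ℝ (Fin 3) → ℂ)
    (hu : ∀ x, u x = ∫ y, Complex.exp (Complex.I * k * ‖x - y‖) / (‖x - y‖ : ℂ) * f y ∂μ) :
    ∃ C > (0 : ℝ), ∃ R₀ > R, ∀ x : EuclideanSpace ℝ (Fin 3), R₀ ≤ ‖x‖ →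
      ‖fderiv ℝ u x (‖x‖⁻¹ • x) - Complex.I * k * u x‖ ≤ C / ‖x‖ ^ 2 := by
  have hae : ∀ᵐ y ∂μ, ‖y‖ ≤ R := ae_support_bound R μ hμ
  have hInt0 : (0:ℝ) ≤ ∫ y, ‖f y‖ ∂μ := integral_nonneg (fun y => norm_nonneg _)
  refine ⟨(4 * |k| * R + 4) * (∫ y, ‖f y‖ ∂μ) + 1, by positivity, 2*R, by linarith, ?_⟩
  intro x hx
  have hn : 0 < ‖x‖ := lt_of_lt_of_le (by positivity) hx
  have hu_eq : u = fun x => ∫ y, Complex.exp (Complex.I * k * ‖x - y‖) / (‖x - y‖ : ℂ) * f y ∂μ :=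
    funext hu
  have hderiv : HasFDerivAt u (∫ y, Dmap k f x y ∂μ) x := by
    rw [hu_eq]
    exact hasFDerivAt_potential k R hR μ hμ f hf x hx
  rw [hderiv.fderiv]
  -- integrability of Dmap
  have hDbound : ∀ᵐ y ∂μ, ‖Dmap k f x y‖ ≤ (2 * |k| / R + 4 / R^2) * ‖f y‖ := by
    refine hae.mono fun y hy => ?_
    have hr : R ≤ ‖x - y‖ := by
      have := norm_sub_norm_le x y
      linarith
    have hxy : x ≠ y := by
      intro h; rw [h, sub_self, norm_zero] at hr; linarith
    calc ‖Dmap k f x y‖ ≤ ‖f y‖ * ((|k| * ‖x - y‖ + 1) / ‖x - y‖^2) :=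
          Dmap_norm_le k f x y hxy
      _ ≤ ‖f y‖ * (2 * |k| / R + 4 / R^2) := by
          gcongr
          exact gker_unif_bound k R _ hR (by linarith)
      _ = (2 * |k| / R + 4 / R^2) * ‖f y‖ := by ring
  have hDint : Integrable (fun y => Dmap k f x y) μ :=
    (hf.norm.const_mul _).mono' (Dmap_aesm k f x μ hf.1) hDbound
  rw [ContinuousLinearMap.integral_apply hDint]
  rw [hu x]
  have hFint : Integrable
      (fun y => Complex.exp (Complex.I * k * ‖x - y‖) / (‖x - y‖ : ℂ) * f y) μ := by
    refine (hf.norm.const_mul R⁻¹).mono'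
      (((kernel_meas k x).aestronglyMeasurable).mul hf.1) ?_
    refine hae.mono fun y hy => ?_
    have hr : R ≤ ‖x - y‖ := by
      have := norm_sub_norm_le x y
      linarith
    have hr0 : 0 < ‖x - y‖ := by linarith
    have hexp : ‖Complex.exp (Complex.I * k * ‖x - y‖)‖ = 1 := by
      rw [Complex.norm_exp]; simp
    rw [norm_mul, norm_div, hexp, Complex.norm_real, Real.norm_eq_abs, abs_of_pos hr0, one_div]
    gcongr
  have hDapp : Integrable (fun y => Dmap k f x y (‖x‖⁻¹ • x)) μ := by
    have := (ContinuousLinearMap.apply ℝ ℂ (‖x‖⁻¹ • x)).integrable_comp hDint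
    simpa using this
  rw [show Complex.I * k * ∫ y, Complex.exp (Complex.I * k * ‖x - y‖) / (‖x - y‖ : ℂ) * f y ∂μ
      = ∫ y, Complex.I * k * (Complex.exp (Complex.I * k * ‖x - y‖) / (‖x - y‖ : ℂ) * f y) ∂μ
      from (integral_const_mul _ _).symm]
  rw [← integral_sub hDapp (hFint.const_mul _)]
  have hptwise : ∀ᵐ y ∂μ, ‖Dmap k f x y (‖x‖⁻¹ • x) -
      Complex.I * k * (Complex.exp (Complex.I * k * ‖x - y‖) / (‖x - y‖ : ℂ) * f y)‖
      ≤ (4 * |k| * R + 4) / ‖x‖^2 * ‖f y‖ :=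
    hae.mono fun y hy => pointwise_est k R hR f y x hy hx
  refine le_trans (norm_integral_le_of_norm_le (hf.norm.const_mul _) hptwise) ?_
  rw [integral_const_mul]
  rw [div_mul_eq_mul_div]
  gcongr
  linarith
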